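/- A subset S of {1,...,n} of states is herdable if and only if there exists a vector k in range(C) with k_i > 0 for every i in S, where C is the controllability matrix. -/

import Mathlib

open MeasureTheory

/-- The state of the LTI system `x' = A x + B u` at time `tf`, starting from `x0`
under the input `u`:  `x(tf) = exp(tf A) x0 + ∫_0^tf exp((tf-τ) A) B u(τ) dτ`. -/
noncomputable def stateAt {n m : ℕ} (A : Matrix (Fin n) (Fin n) ℝ) (B : Matrix (Fin n) (Fin m) ℝ)
    (x0 : Fin n → ℝ) (u : ℝ → Fin m → ℝ) (tf : ℝ) : Fin n → ℝ :=
  (NormedSpace.exp (tf • A)).mulVec x0 +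
    ∫ τ in (0:ℝ)..tf, (NormedSpace.exp ((tf - τ) • A) * B).mulVec (u τ)

/-- The input `u` is admissible (integrable) on `[0, tf]`. -/
def ValidInput {n m : ℕ} (A : Matrix (Fin n) (Fin n) ℝ) (B : Matrix (Fin n) (Fin m) ℝ)
    (tf : ℝ) (u : ℝ → Fin m → ℝ) : Prop :=
  IntervalIntegrable (fun τ => (NormedSpace.exp ((tf - τ) • A) * B).mulVec (u τ)) volume 0 tf

/-- A subset `S` of the states is herdable: from every initial condition and for every
threshold `h ≥ 0` there are a finite time `tf > 0` and an input driving every state in `S`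
at least to `h` at time `tf`. -/
def Herdable {n m : ℕ} (A : Matrix (Fin n) (Fin n) ℝ) (B : Matrix (Fin n) (Fin m) ℝ)
    (S : Set (Fin n)) : Prop :=
  ∀ x0 : Fin n → ℝ, ∀ h : ℝ, 0 ≤ h →
    ∃ tf : ℝ, 0 < tf ∧ ∃ u : ℝ → Fin m → ℝ, ValidInput A B tf u ∧
      ∀ i ∈ S, h ≤ stateAt A B x0 u tf i

/-- The controllability matrix `C = [B, AB, …, A^{n-1} B]`; the column indexed by
`(d, j)` is the `j`-th column of `A^d B`. -/
def ctrb {n m : ℕ} (A : Matrix (Fin n) (Fin n) ℝ) (B : Matrix (Fin n) (Fin m) ℝ) :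
    Matrix (Fin n) (Fin n × Fin m) ℝ := fun i p => (A ^ (p.1 : ℕ) * B) i p.2

/-! ### Auxiliary machinery -/

open NormedSpace

namespace HerdAux

/-- A convergent series of elements of a closed submodule sums inside it. -/
lemma hasSum_mem_submodule {E : Type*} [NormedAddCommGroup E] [NormedSpace ℝ E]
    {V : Submodule ℝ E} (hV : IsClosed (V : Set E)) {f : ℕ → E} {x : E}
    (h : HasSum f x) (hf : ∀ p, f p ∈ V) : x ∈ V := by
  refine hV.mem_of_tendsto h.tendsto_sum_nat (Filter.Eventually.of_forall fun N => ?_)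
  exact Submodule.sum_mem V fun i _ => hf i

/-- Integral of a function valued in a submodule of a finite-dimensional space lies in it. -/
lemma intervalIntegral_mem_submodule {E : Type*} [NormedAddCommGroup E] [NormedSpace ℝ E]
    [FiniteDimensional ℝ E] (V : Submodule ℝ E) {f : ℝ → E} {a b : ℝ}
    (hint : IntervalIntegrable f volume a b) (hmem : ∀ τ, f τ ∈ V) :
    (∫ τ in a..b, f τ) ∈ V := by
  obtain ⟨W, hW⟩ := Submodule.exists_isCompl V
  let P : E →ₗ[ℝ] E := V.subtype ∘ₗ Submodule.projectionOnto V W hW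
  have hPid : ∀ x ∈ V, P x = x := fun x hx => by
    simpa [P] using congrArg (Subtype.val) (Submodule.projectionOnto_apply_left hW ⟨x, hx⟩)
  have hPmem : ∀ x, P x ∈ V := fun x => Submodule.coe_mem _
  let Pc : E →L[ℝ] E := LinearMap.toContinuousLinearMap P
  have h1 : (∫ τ in a..b, Pc (f τ)) = Pc (∫ τ in a..b, f τ) :=
    Pc.intervalIntegral_comp_comm hint
  have h2 : (∫ τ in a..b, Pc (f τ)) = ∫ τ in a..b, f τ := by
    congr 1; funext τ; exact hPid _ (hmem τ)
  rw [← h2, h1]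
  exact hPmem _

/-- Membership in a closed submodule is preserved by derivatives of curves staying
inside it on an interval. -/
lemma mem_of_hasDerivAt_mem {E : Type*} [NormedAddCommGroup E] [NormedSpace ℝ E]
    {V : Submodule ℝ E} (hV : IsClosed (V : Set E)) {c : ℝ → E} {a b s : ℝ}
    (hs : s ∈ Set.Ico a b) (hmem : ∀ y ∈ Set.Ico a b, c y ∈ V) {v : E}
    (hd : HasDerivAt c v s) : v ∈ V := by
  have h1 : Filter.Tendsto (slope c s) (nhdsWithin s {s}ᶜ) (nhds v) :=
    hasDerivAt_iff_tendsto_slope.mp hd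
  have hsub : Set.Ioo s b ⊆ {s}ᶜ := fun y hy => ne_of_gt hy.1
  have h2 : Filter.Tendsto (slope c s) (nhdsWithin s (Set.Ioo s b)) (nhds v) :=
    h1.mono_left (nhdsWithin_mono _ hsub)
  have hne : (nhdsWithin s (Set.Ioo s b)).NeBot := by
    apply mem_closure_iff_nhdsWithin_neBot.mp
    rw [closure_Ioo (ne_of_lt hs.2)]
    exact ⟨le_refl s, le_of_lt hs.2⟩
  refine hV.mem_of_tendsto h2 ?_
  filter_upwards [self_mem_nhdsWithin] with y hy
  have hyV : c y ∈ V := hmem y ⟨le_trans hs.1 (le_of_lt hy.1), hy.2⟩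
  have : slope c s y = (y - s)⁻¹ • (c y - c s) := by
    simp [slope_def_module]
  rw [this]
  exact Submodule.smul_mem _ _ (Submodule.sub_mem _ hyV (hmem s hs))

variable {n m : ℕ} (A : Matrix (Fin n) (Fin n) ℝ) (B : Matrix (Fin n) (Fin m) ℝ)

/-- The range of the controllability matrix, as a submodule. -/
def ctrbRange : Submodule ℝ (Fin n → ℝ) := LinearMap.range (Matrix.mulVecLin (ctrb A B))

lemma pow_mem_span (p : ℕ) :
    A ^ p ∈ Submodule.span ℝ (Set.range fun d : Fin n => A ^ (d : ℕ)) := by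
  rcases Nat.eq_zero_or_pos n with hn | hn
  · subst hn
    have : A ^ p = 0 := Subsingleton.elim _ _
    rw [this]; exact zero_mem _
  rw [Matrix.pow_eq_aeval_mod_charpoly]
  have hmono : A.charpoly.Monic := A.charpoly_monic
  have hdeg : (Polynomial.X ^ p %ₘ A.charpoly).natDegree < n := by
    have h1 : A.charpoly ≠ 1 := by
      intro h
      have := A.charpoly_natDegree_eq_dim
      rw [h, Polynomial.natDegree_one, Fintype.card_fin] at this
      omega
    have := Polynomial.natDegree_modByMonic_lt (Polynomial.X ^ p) hmono h1
    have h2 := A.charpoly_natDegree_eq_dim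
    rw [Fintype.card_fin] at h2
    omega
  rw [Polynomial.aeval_eq_sum_range' hdeg]
  apply Submodule.sum_mem
  intro d hd
  apply Submodule.smul_mem
  exact Submodule.subset_span ⟨⟨d, Finset.mem_range.mp hd⟩, rfl⟩

/-- `M ↦ (Ad * M * B).mulVec w` as a linear map. -/
def Lmap (Ad : Matrix (Fin n) (Fin n) ℝ) (w : Fin m → ℝ) :
    Matrix (Fin n) (Fin n) ℝ →ₗ[ℝ] (Fin n → ℝ) where
  toFun M := (Ad * M * B).mulVec w
  map_add' M N := by simp only [Matrix.mul_add, Matrix.add_mul, Matrix.add_mulVec]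
  map_smul' r M := by
    simp only [Matrix.mul_smul, Matrix.smul_mul, Matrix.smul_mulVec, RingHom.id_apply]

lemma mulVec_pow_mem (p : ℕ) (w : Fin m → ℝ) :
    (A ^ p * B).mulVec w ∈ ctrbRange A B := by
  have hgen : ∀ d : Fin n, (A ^ (d : ℕ) * B).mulVec w ∈ ctrbRange A B := by
    intro d
    classical
    refine ⟨fun p => if p.1 = d then w p.2 else 0, ?_⟩
    funext i
    simp only [Matrix.mulVecLin_apply, Matrix.mulVec, dotProduct, ctrb,
      Fintype.sum_prod_type, mul_ite, mul_zero]
    rw [Finset.sum_comm]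
    simp [Finset.sum_ite_eq']
  have hspan : Submodule.span ℝ (Set.range fun d : Fin n => A ^ (d : ℕ)) ≤
      Submodule.comap (Lmap B 1 w) (ctrbRange A B) := by
    rw [Submodule.span_le]
    rintro _ ⟨d, rfl⟩
    show ((1 : Matrix (Fin n) (Fin n) ℝ) * A ^ (d : ℕ) * B).mulVec w ∈ ctrbRange A B
    rw [Matrix.one_mul]
    exact hgen d
  have := hspan (pow_mem_span A p)
  simpa [Lmap, Matrix.one_mul] using this

lemma exp_smul_hasSum (s : ℝ) (w : Fin m → ℝ) :
    HasSum (fun p : ℕ => ((p.factorial : ℝ)⁻¹ * s ^ p) • (A ^ p * B).mulVec w)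
      ((exp (s • A) * B).mulVec w) := by
  letI : SeminormedRing (Matrix (Fin n) (Fin n) ℝ) := Matrix.linftyOpSemiNormedRing
  letI : NormedRing (Matrix (Fin n) (Fin n) ℝ) := Matrix.linftyOpNormedRing
  letI : NormedAlgebra ℝ (Matrix (Fin n) (Fin n) ℝ) := Matrix.linftyOpNormedAlgebra
  have h := expSeries_hasSum_exp (𝕂 := ℝ) (s • A)
  have h2 : HasSum (fun p : ℕ => ((p.factorial : ℝ)⁻¹) • (s • A) ^ p) (exp (s • A)) := by
    simp only [expSeries_apply_eq] at h; exact h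
  let L : Matrix (Fin n) (Fin n) ℝ →L[ℝ] (Fin n → ℝ) :=
    LinearMap.toContinuousLinearMap (Lmap B 1 w)
  have h3 := L.hasSum h2
  have e1 : L (exp (s • A)) = (exp (s • A) * B).mulVec w := by
    simp [L, Lmap, LinearMap.coe_mk]
  have e2 : ∀ p : ℕ, L (((p.factorial : ℝ)⁻¹) • (s • A) ^ p)
      = ((p.factorial : ℝ)⁻¹ * s ^ p) • (A ^ p * B).mulVec w := by
    intro p
    rw [L.map_smul, smul_pow]
    simp [L, Lmap, Matrix.smul_mul, Matrix.smul_mulVec, smul_smul]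
  rw [e1] at h3
  exact HasSum.congr_fun h3 fun p => (e2 p).symm

lemma exp_mulVec_mem_ctrbRange (s : ℝ) (w : Fin m → ℝ) :
    (exp (s • A) * B).mulVec w ∈ ctrbRange A B := by
  have hV : IsClosed ((ctrbRange A B : Set (Fin n → ℝ)))
      := Submodule.closed_of_finiteDimensional _
  exact hasSum_mem_submodule hV (exp_smul_hasSum A B s w)
    fun p => Submodule.smul_mem _ _ (mulVec_pow_mem A B p w)

lemma hasDerivAt_pow_exp (d : ℕ) (w : Fin m → ℝ) (s : ℝ) :
    HasDerivAt (fun t : ℝ => (A ^ d * exp (t • A) * B).mulVec w)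
      ((A ^ (d + 1) * exp (s • A) * B).mulVec w) s := by
  letI : SeminormedRing (Matrix (Fin n) (Fin n) ℝ) := Matrix.linftyOpSemiNormedRing
  letI : NormedRing (Matrix (Fin n) (Fin n) ℝ) := Matrix.linftyOpNormedRing
  letI : NormedAlgebra ℝ (Matrix (Fin n) (Fin n) ℝ) := Matrix.linftyOpNormedAlgebra
  let L : Matrix (Fin n) (Fin n) ℝ →L[ℝ] (Fin n → ℝ) :=
    LinearMap.toContinuousLinearMap (Lmap B (A ^ d) w)
  have hexp : HasDerivAt (fun t : ℝ => exp (t • A)) (A * exp (s • A)) s :=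
    hasDerivAt_exp_smul_const' (𝕂 := ℝ) A s
  have h2 : HasDerivAt (fun t : ℝ => L (exp (t • A))) (L (A * exp (s • A))) s :=
    L.hasFDerivAt.comp_hasDerivAt s hexp
  have e1 : (fun t : ℝ => L (exp (t • A)))
      = fun t : ℝ => (A ^ d * exp (t • A) * B).mulVec w := rfl
  have e2 : L (A * exp (s • A)) = (A ^ (d + 1) * exp (s • A) * B).mulVec w := by
    show (A ^ d * (A * exp (s • A)) * B).mulVec w = _
    rw [← mul_assoc, ← pow_succ]
  rw [e1, e2] at h2
  exact h2

lemma continuous_exp_mulVec (w : Fin m → ℝ) :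
    Continuous fun t : ℝ => (exp (t • A) * B).mulVec w := by
  have e : (fun t : ℝ => (exp (t • A) * B).mulVec w)
      = fun t : ℝ => (A ^ 0 * exp (t • A) * B).mulVec w := by
    funext t; rw [pow_zero, Matrix.one_mul]
  rw [e]
  exact continuous_iff_continuousAt.mpr fun s => (hasDerivAt_pow_exp A B 0 w s).continuousAt

/-- The set of states reachable from `0` at time `tf`. -/
def Reach (tf : ℝ) : Submodule ℝ (Fin n → ℝ) where
  carrier := {x | ∃ u : ℝ → Fin m → ℝ, ValidInput A B tf u ∧
    (∫ τ in (0:ℝ)..tf, (exp ((tf - τ) • A) * B).mulVec (u τ)) = x}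
  zero_mem' := by
    refine ⟨fun _ => 0, ?_, ?_⟩
    · unfold ValidInput
      simp only [Matrix.mulVec_zero]
      exact intervalIntegrable_const
    · simp only [Matrix.mulVec_zero, intervalIntegral.integral_zero]
  add_mem' := by
    rintro x y ⟨u1, hu1, rfl⟩ ⟨u2, hu2, rfl⟩
    refine ⟨fun τ => u1 τ + u2 τ, ?_, ?_⟩
    · unfold ValidInput at *
      simp only [Matrix.mulVec_add]
      exact hu1.add hu2
    · simp only [Matrix.mulVec_add]
      exact intervalIntegral.integral_add hu1 hu2
  smul_mem' := by
    rintro c x ⟨u, hu, rfl⟩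
    refine ⟨fun τ => c • u τ, ?_, ?_⟩
    · unfold ValidInput at *
      simp only [Matrix.mulVec_smul]
      exact hu.smul c
    · simp only [Matrix.mulVec_smul]
      exact intervalIntegral.integral_smul c _

lemma integral_exp_mem_reach {tf : ℝ} (h0tf : 0 ≤ tf) (w : Fin m → ℝ) {s : ℝ}
    (h0 : 0 ≤ s) (hs : s ≤ tf) :
    (∫ σ in (0:ℝ)..s, (exp (σ • A) * B).mulVec w) ∈ Reach A B tf := by
  classical
  set F : ℝ → (Fin n → ℝ) := fun σ => (exp (σ • A) * B).mulVec w with hF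
  have hFc : Continuous F := continuous_exp_mulVec A B w
  set I : Set ℝ := Set.Ioc (tf - s) tf with hI
  refine ⟨Set.indicator I (fun _ => w), ?_, ?_⟩
  · -- validity
    have key : (fun τ => (exp ((tf - τ) • A) * B).mulVec (Set.indicator I (fun _ => w) τ))
        = Set.indicator I (fun τ => F (tf - τ)) := by
      funext τ
      by_cases hτ : τ ∈ I
      · rw [Set.indicator_of_mem hτ, Set.indicator_of_mem hτ]
      · rw [Set.indicator_of_notMem hτ, Set.indicator_of_notMem hτ, Matrix.mulVec_zero]
    unfold ValidInput
    rw [key, intervalIntegrable_iff_integrableOn_Ioc_of_le h0tf]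
    exact ((hFc.comp (continuous_const.sub continuous_id)).integrableOn_Ioc).indicator
      measurableSet_Ioc
  · have key : (fun τ => (exp ((tf - τ) • A) * B).mulVec (Set.indicator I (fun _ => w) τ))
        = Set.indicator I (fun τ => F (tf - τ)) := by
      funext τ
      by_cases hτ : τ ∈ I
      · rw [Set.indicator_of_mem hτ, Set.indicator_of_mem hτ]
      · rw [Set.indicator_of_notMem hτ, Set.indicator_of_notMem hτ, Matrix.mulVec_zero]
    have hIsub : I ⊆ Set.Ioc 0 tf := fun x hx => ⟨lt_of_le_of_lt (by linarith) hx.1, hx.2⟩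
    calc (∫ τ in (0:ℝ)..tf,
            (exp ((tf - τ) • A) * B).mulVec (Set.indicator I (fun _ => w) τ))
        = ∫ τ in (0:ℝ)..tf, Set.indicator I (fun τ => F (tf - τ)) τ := by rw [key]
      _ = ∫ σ in (0:ℝ)..s, F σ := by
          rw [intervalIntegral.integral_of_le h0tf, integral_indicator measurableSet_Ioc,
            Measure.restrict_restrict measurableSet_Ioc,
            Set.inter_eq_self_of_subset_left hIsub,
            ← intervalIntegral.integral_of_le (by linarith : tf - s ≤ tf),
            intervalIntegral.integral_comp_sub_left F tf]
          norm_num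

lemma pow_mulVec_exp_mem_reach {tf : ℝ} (htf : 0 < tf) (w : Fin m → ℝ) (d : ℕ) :
    ∀ s ∈ Set.Ico (0:ℝ) tf, (A ^ d * exp (s • A) * B).mulVec w ∈ Reach A B tf := by
  have hcl : IsClosed ((Reach A B tf : Set (Fin n → ℝ)))
      := Submodule.closed_of_finiteDimensional _
  induction d with
  | zero =>
    intro s hs
    set F : ℝ → (Fin n → ℝ) := fun σ => (exp (σ • A) * B).mulVec w with hF
    have hFc : Continuous F := continuous_exp_mulVec A B w
    have hcurve : ∀ y ∈ Set.Ico (0:ℝ) tf, (∫ σ in (0:ℝ)..y, F σ) ∈ Reach A B tf :=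
      fun y hy => integral_exp_mem_reach A B (le_of_lt htf) w hy.1 (le_of_lt hy.2)
    have hd : HasDerivAt (fun y => ∫ σ in (0:ℝ)..y, F σ) (F s) s :=
      intervalIntegral.integral_hasDerivAt_right (hFc.intervalIntegrable 0 s)
        hFc.aestronglyMeasurable.stronglyMeasurableAtFilter hFc.continuousAt
    have := mem_of_hasDerivAt_mem hcl hs hcurve hd
    simpa [F, pow_zero, Matrix.one_mul] using this
  | succ d ih =>
    intro s hs
    exact mem_of_hasDerivAt_mem hcl hs (fun y hy => ih y hy) (hasDerivAt_pow_exp A B d w s)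

lemma pow_mulVec_mem_reach {tf : ℝ} (htf : 0 < tf) (w : Fin m → ℝ) (d : ℕ) :
    (A ^ d * B).mulVec w ∈ Reach A B tf := by
  have := pow_mulVec_exp_mem_reach A B htf w d 0 ⟨le_refl 0, htf⟩
  simpa [zero_smul, exp_zero, Matrix.mul_one] using this

lemma ctrb_mulVec_mem_reach {tf : ℝ} (htf : 0 < tf) (y : Fin n × Fin m → ℝ) :
    (ctrb A B).mulVec y ∈ Reach A B tf := by
  classical
  have hdecomp : (ctrb A B).mulVec y
      = ∑ p : Fin n × Fin m, y p • (A ^ (p.1 : ℕ) * B).mulVec (Pi.single p.2 1) := by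
    funext i
    simp only [Matrix.mulVec, dotProduct, Finset.sum_apply, Pi.smul_apply,
      Matrix.mulVec_single, smul_eq_mul, ctrb, MulOpposite.op_one, one_smul, Matrix.col_apply]
    refine Finset.sum_congr rfl fun p _ => ?_
    ring
  rw [hdecomp]
  exact Submodule.sum_mem _ fun p _ =>
    Submodule.smul_mem _ _ (pow_mulVec_mem_reach A B htf (Pi.single p.2 1) (p.1 : ℕ))

end HerdAux

/-- A subset `S` of states is herdable iff there is a vector `k` in the range of the
controllability matrix with `k i > 0` for every `i ∈ S`. -/
theorem herdable_iff_range_ctrb {n m : ℕ}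
    (A : Matrix (Fin n) (Fin n) ℝ) (B : Matrix (Fin n) (Fin m) ℝ) (S : Set (Fin n)) :
    Herdable A B S ↔
      ∃ k : Fin n → ℝ, (∃ y : Fin n × Fin m → ℝ, (ctrb A B).mulVec y = k) ∧
        ∀ i ∈ S, 0 < k i := by
  constructor
  · intro hH
    obtain ⟨tf, htf, u, hu, hreach⟩ := hH 0 1 zero_le_one
    refine ⟨stateAt A B 0 u tf, ?_, fun i hi => lt_of_lt_of_le one_pos (hreach i hi)⟩
    have hstate : stateAt A B 0 u tf
        = ∫ τ in (0:ℝ)..tf, (exp ((tf - τ) • A) * B).mulVec (u τ) := by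
      unfold stateAt
      rw [Matrix.mulVec_zero, zero_add]
    rw [hstate]
    have hmem : (∫ τ in (0:ℝ)..tf, (exp ((tf - τ) • A) * B).mulVec (u τ))
        ∈ HerdAux.ctrbRange A B :=
      HerdAux.intervalIntegral_mem_submodule _ hu
        fun τ => HerdAux.exp_mulVec_mem_ctrbRange A B (tf - τ) (u τ)
    exact hmem
  · rintro ⟨k, ⟨y, hy⟩, hkpos⟩
    intro x0 h hh
    refine ⟨1, one_pos, ?_⟩
    set v : Fin n → ℝ := (exp ((1:ℝ) • A)).mulVec x0 with hv
    obtain ⟨c0, hc0⟩ := Finite.exists_le fun i : Fin n => (h - v i) / k i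
    set c : ℝ := max c0 0 with hc
    have hk : k ∈ HerdAux.Reach A B 1 := by
      rw [← hy]; exact HerdAux.ctrb_mulVec_mem_reach A B one_pos y
    have hck : c • k ∈ HerdAux.Reach A B 1 := Submodule.smul_mem _ c hk
    obtain ⟨u, hu, hint⟩ := hck
    refine ⟨u, hu, fun i hi => ?_⟩
    have hstate : stateAt A B x0 u 1 = v + c • k := by
      unfold stateAt
      rw [hint]
    rw [hstate]
    have hki : 0 < k i := hkpos i hi
    have h1 : (h - v i) / k i ≤ c := le_trans (hc0 i) (le_max_left _ _)
    have h2 : h - v i ≤ c * k i := by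
      rw [div_le_iff₀ hki] at h1
      linarith
    simp only [Pi.add_apply, Pi.smul_apply, smul_eq_mul]
    linarith
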